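/- arXiv:2408.04202 — 4 statements merged into one kernel-verified Lean document; each statement's English description precedes it below -/
import Mathlib

section
/- Let L be the symmetric Laplacian of a connected undirected weighted graph on N nodes with algebraic connectivity λ₂ = min{zᵀLz : z ⊥ 𝟙, ‖z‖ = 1}, and let γ1, γ2, V1, V2 > 0 and ℓ1, ℓ2 be Lipschitz constants of g1, g2 : ℝ → ℝ. If V1·ℓ1·V2·ℓ2 / ((γ1 + λ₂)·γ2) < 1, then every solution X̄1 ∈ ℝᴺ of the equilibrium equation (γ1·I + L)·X̄1 = G̃(X̄1), where G̃(X)_i = V1·g2((V2/γ2)·g1(X_i)), lies in span{𝟙}. -/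
open Matrix

/-- If `V1 ℓ1 V2 ℓ2 / ((γ1 + λ₂) γ2) < 1`, every equilibrium
`(γ1 I + L) X̄1 = G̃(X̄1)` of the network is synchronized, i.e. lies in
`span{𝟙}`. -/
theorem stmt_9 (N : ℕ) (L : Matrix (Fin N) (Fin N) ℝ)
    (hsymm : L.IsSymm)
    (hones : L *ᵥ (fun _ => (1:ℝ)) = 0)
    (hpsd : ∀ v : Fin N → ℝ, 0 ≤ v ⬝ᵥ (L *ᵥ v))
    (lam : ℝ)
    (hlam : lam = sInf {r : ℝ | ∃ z : Fin N → ℝ,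
      z ⬝ᵥ (fun _ => (1:ℝ)) = 0 ∧ z ⬝ᵥ z = 1 ∧ r = z ⬝ᵥ (L *ᵥ z)})
    (hconn : 0 < lam)
    (γ1 γ2 V1 V2 ℓ1 ℓ2 : ℝ)
    (hγ1 : 0 < γ1) (hγ2 : 0 < γ2) (hV1 : 0 < V1) (hV2 : 0 < V2)
    (hℓ1 : 0 ≤ ℓ1) (hℓ2 : 0 ≤ ℓ2)
    (g1 g2 : ℝ → ℝ)
    (hg1 : ∀ x y, |g1 x - g1 y| ≤ ℓ1 * |x - y|)
    (hg2 : ∀ x y, |g2 x - g2 y| ≤ ℓ2 * |x - y|)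
    (hcond : V1 * ℓ1 * V2 * ℓ2 / ((γ1 + lam) * γ2) < 1)
    (X : Fin N → ℝ)
    (heq : (γ1 • (1 : Matrix (Fin N) (Fin N) ℝ) + L) *ᵥ X =
      fun i => V1 * g2 ((V2 / γ2) * g1 (X i))) :
    ∃ c : ℝ, X = fun _ => c := by
  rcases Nat.eq_zero_or_pos N with h0 | hN
  · subst h0; exact ⟨0, funext fun i => i.elim0⟩
  have hNne : (N : ℝ) ≠ 0 := by positivity
  set G : Fin N → ℝ := fun i => V1 * g2 ((V2 / γ2) * g1 (X i)) with hGdef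
  set α : ℝ := (∑ i, X i) / N with hα
  set z : Fin N → ℝ := fun i => X i - α with hzdef
  have hzsum : ∑ i, z i = 0 := by
    simp only [hzdef, Finset.sum_sub_distrib, Finset.sum_const, Finset.card_univ,
      Fintype.card_fin, nsmul_eq_mul, hα]
    field_simp
    ring
  set A : ℝ := z ⬝ᵥ z with hA
  have hA_nonneg : 0 ≤ A := by
    rw [hA, dotProduct]
    exact Finset.sum_nonneg fun i _ => mul_self_nonneg _
  set k : ℝ := V1 * ℓ1 * V2 * ℓ2 / γ2 with hk
  have hk0 : 0 ≤ k := by positivity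
  have hsum : 0 < γ1 + lam := by linarith
  have hklt : k < γ1 + lam := by
    rw [div_lt_one (by positivity)] at hcond
    rw [hk, div_lt_iff₀ hγ2]
    linarith
  set c : ℝ := V1 * g2 ((V2 / γ2) * g1 α) with hc
  -- pointwise Lipschitz bound
  have hptw : ∀ i, |G i - c| ≤ k * |z i| := by
    intro i
    have h1 : |G i - c| = V1 * |g2 ((V2 / γ2) * g1 (X i)) - g2 ((V2 / γ2) * g1 α)| := by
      rw [hGdef, hc, ← mul_sub, abs_mul, abs_of_pos hV1]
    have h2 : |g2 ((V2 / γ2) * g1 (X i)) - g2 ((V2 / γ2) * g1 α)| ≤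
        ℓ2 * ((V2 / γ2) * |g1 (X i) - g1 α|) := by
      have := hg2 ((V2 / γ2) * g1 (X i)) ((V2 / γ2) * g1 α)
      rw [← mul_sub, abs_mul, abs_of_pos (by positivity : (0:ℝ) < V2 / γ2)] at this
      exact this
    have h3 : |g1 (X i) - g1 α| ≤ ℓ1 * |z i| := by
      have := hg1 (X i) α
      simpa [hzdef] using this
    calc |G i - c| = V1 * |g2 ((V2 / γ2) * g1 (X i)) - g2 ((V2 / γ2) * g1 α)| := h1
      _ ≤ V1 * (ℓ2 * ((V2 / γ2) * |g1 (X i) - g1 α|)) := by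
          exact mul_le_mul_of_nonneg_left h2 hV1.le
      _ ≤ V1 * (ℓ2 * ((V2 / γ2) * (ℓ1 * |z i|))) := by
          have hpos : (0:ℝ) < V2 / γ2 := by positivity
          have := mul_le_mul_of_nonneg_left h3 hpos.le
          have := mul_le_mul_of_nonneg_left this hℓ2
          exact mul_le_mul_of_nonneg_left this hV1.le
      _ = k * |z i| := by rw [hk]; field_simp
  have hsq : ∀ i, (G i - c) ^ 2 ≤ k ^ 2 * z i ^ 2 := by
    intro i
    have h := pow_le_pow_left₀ (abs_nonneg _) (hptw i) 2
    calc (G i - c) ^ 2 = |G i - c| ^ 2 := (sq_abs _).symm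
      _ ≤ (k * |z i|) ^ 2 := h
      _ = k ^ 2 * z i ^ 2 := by rw [mul_pow, sq_abs]
  -- rewrite the equilibrium equation
  have heq' : γ1 • X + L *ᵥ X = G := by
    rw [← heq, add_mulVec, smul_mulVec, one_mulVec]
  have hXz : X = z + α • (fun _ => (1:ℝ)) := by
    funext i
    simp [hzdef]
  have hzX : z ⬝ᵥ X = A := by
    rw [hA]
    nth_rewrite 1 [hXz]
    rw [dotProduct_add, dotProduct_smul]
    have : z ⬝ᵥ (fun _ => (1:ℝ)) = 0 := by
      simpa [dotProduct] using hzsum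
    rw [this]
    simp
  have hLX : L *ᵥ X = L *ᵥ z := by
    rw [hXz, mulVec_add, mulVec_smul, hones, smul_zero, add_zero]
  have hdot : γ1 * A + z ⬝ᵥ (L *ᵥ z) = z ⬝ᵥ G := by
    have := congrArg (fun v => z ⬝ᵥ v) heq'
    simpa [dotProduct_add, dotProduct_smul, hzX, hLX, smul_eq_mul] using this
  -- lower bound via lam
  have hz1 : z ⬝ᵥ (fun _ => (1:ℝ)) = 0 := by simpa [dotProduct] using hzsum
  have hbdd : BddBelow {r : ℝ | ∃ w : Fin N → ℝ,
      w ⬝ᵥ (fun _ => (1:ℝ)) = 0 ∧ w ⬝ᵥ w = 1 ∧ r = w ⬝ᵥ (L *ᵥ w)} := by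
    refine ⟨0, ?_⟩
    rintro r ⟨w, -, -, rfl⟩
    exact hpsd w
  have hlamA : lam * A ≤ z ⬝ᵥ (L *ᵥ z) := by
    rcases eq_or_lt_of_le hA_nonneg with h | h
    · rw [← h, mul_zero]; exact hpsd z
    · have hmem : (z ⬝ᵥ (L *ᵥ z)) / A ∈ {r : ℝ | ∃ w : Fin N → ℝ,
          w ⬝ᵥ (fun _ => (1:ℝ)) = 0 ∧ w ⬝ᵥ w = 1 ∧ r = w ⬝ᵥ (L *ᵥ w)} := by
        set s : ℝ := Real.sqrt A with hs
        have hspos : 0 < s := Real.sqrt_pos.mpr h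
        have hs2 : s * s = A := Real.mul_self_sqrt hA_nonneg
        refine ⟨s⁻¹ • z, ?_, ?_, ?_⟩
        · rw [smul_dotProduct, hz1, smul_zero]
        · rw [smul_dotProduct, dotProduct_smul, ← hA, smul_eq_mul, smul_eq_mul]
          field_simp
          nlinarith
        · rw [smul_dotProduct, mulVec_smul, dotProduct_smul, smul_eq_mul, smul_eq_mul]
          rw [div_eq_iff (ne_of_gt h), ← hs2]
          field_simp
      have hle : lam ≤ (z ⬝ᵥ (L *ᵥ z)) / A := hlam ▸ csInf_le hbdd hmem
      rw [le_div_iff₀ h] at hle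
      exact hle
  -- Cauchy-Schwarz step
  have hDsum : z ⬝ᵥ G = ∑ i, z i * (G i - c) := by
    rw [dotProduct]
    simp only [mul_sub, Finset.sum_sub_distrib, ← Finset.sum_mul, hzsum]
    ring
  have hAsq : A = ∑ i, z i ^ 2 := by
    rw [hA, dotProduct]
    exact Finset.sum_congr rfl fun i _ => (sq (z i)).symm
  have hcs : (∑ i, z i * (G i - c)) ^ 2 ≤ A * ∑ i, (G i - c) ^ 2 := by
    rw [hAsq]
    exact Finset.sum_mul_sq_le_sq_mul_sq _ _ _
  have hsum2 : ∑ i, (G i - c) ^ 2 ≤ k ^ 2 * A := by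
    calc ∑ i, (G i - c) ^ 2 ≤ ∑ i, k ^ 2 * z i ^ 2 :=
          Finset.sum_le_sum fun i _ => hsq i
      _ = k ^ 2 * A := by rw [← Finset.mul_sum, hAsq]
  -- conclude A = 0
  have hge : (γ1 + lam) * A ≤ z ⬝ᵥ G := by nlinarith
  have hDge : 0 ≤ (γ1 + lam) * A := mul_nonneg hsum.le hA_nonneg
  have hD2 : ((γ1 + lam) * A) ^ 2 ≤ k ^ 2 * A ^ 2 := by
    have h1 : ((γ1 + lam) * A) ^ 2 ≤ (z ⬝ᵥ G) ^ 2 := pow_le_pow_left₀ hDge hge 2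
    have h2 : (z ⬝ᵥ G) ^ 2 ≤ A * (k ^ 2 * A) := by
      rw [hDsum]
      calc (∑ i, z i * (G i - c)) ^ 2 ≤ A * ∑ i, (G i - c) ^ 2 := hcs
        _ ≤ A * (k ^ 2 * A) := mul_le_mul_of_nonneg_left hsum2 hA_nonneg
    have h3 : A * (k ^ 2 * A) = k ^ 2 * A ^ 2 := by ring
    linarith
  have hfac : (0:ℝ) < (γ1 + lam) ^ 2 - k ^ 2 := by
    have h := mul_pos (show 0 < γ1 + lam - k by linarith) (show 0 < γ1 + lam + k by linarith)
    have he : (γ1 + lam - k) * (γ1 + lam + k) = (γ1 + lam) ^ 2 - k ^ 2 := by ring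
    linarith
  have hD2' : (γ1 + lam) ^ 2 * A ^ 2 ≤ k ^ 2 * A ^ 2 := by rw [← mul_pow]; exact hD2
  have hA2 : A ^ 2 ≤ 0 := by
    by_contra hpos
    push_neg at hpos
    have hmul := mul_pos hfac hpos
    have he : ((γ1 + lam) ^ 2 - k ^ 2) * A ^ 2 =
        (γ1 + lam) ^ 2 * A ^ 2 - k ^ 2 * A ^ 2 := by ring
    linarith
  have hA0 : A = 0 := by
    have h0 : A ^ 2 = 0 := le_antisymm hA2 (sq_nonneg A)
    exact pow_eq_zero_iff two_ne_zero |>.mp h0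
  -- conclude z = 0
  have hzero : ∀ i, z i = 0 := by
    intro i
    have hsum0 : ∑ j, z j ^ 2 = 0 := by rw [← hAsq, hA0]
    have := (Finset.sum_eq_zero_iff_of_nonneg
      (fun j _ => sq_nonneg (z j))).mp hsum0 i (Finset.mem_univ i)
    exact pow_eq_zero_iff two_ne_zero |>.mp this
  refine ⟨α, funext fun i => ?_⟩
  have h := hzero i
  simp only [hzdef] at h
  linarith
end

section
/- Let g : ℝ → ℝ be the piecewise affine function g(x) = 0 for x < θ, g(x) = (x-θ)/δ for θ ≤ x ≤ θ+δ, g(x) = 1 for x > θ+δ, with θ, δ > 0. If V1·V2/(δ·γ1·γ2) > 1 + θ/δ (with γ1, γ2, V1, V2 > 0), then the planar system ẋ1 = -γ1·x1 + V1·x2, ẋ2 = -γ2·x2 + V2·g(x1) has exactly three equilibria: P_OFF = (0, 0), P_ON = (V1V2/(γ1γ2), V2/γ2), and the saddle point P_s = (x̄1, x̄2) with x̄2 = (V2θ/(δγ2))·(V1V2/(δγ1γ2) - 1)⁻¹ and x̄1 = (V1/γ1)·x̄2; in particular x̄1 satisfies θ < x̄1 < θ + δ and P_ON satisfies V1V2/(γ1γ2)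 > θ + δ. -/
/-- Under Assumption 2, the uncoupled piecewise affine bistable compartment
has exactly three equilibria: `P_OFF`, `P_ON` and the saddle `P_s`; the
saddle's first coordinate lies strictly inside the linear regime and `P_ON`
lies in the high-saturation regime. -/
theorem stmt_11 (γ1 γ2 V1 V2 θ δ : ℝ)
    (hγ1 : 0 < γ1) (hγ2 : 0 < γ2) (hV1 : 0 < V1) (hV2 : 0 < V2)
    (hθ : 0 < θ) (hδ : 0 < δ)
    (hbist : V1 * V2 / (δ * γ1 * γ2) > 1 + θ / δ)
    (g : ℝ → ℝ)
    (hg : ∀ x, g x = if x < θ then 0 else if x ≤ θ + δ then (x - θ) / δ else 1)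
    (xb2 xb1 : ℝ)
    (hxb2 : xb2 = (V2 * θ / (δ * γ2)) * (V1 * V2 / (δ * γ1 * γ2) - 1)⁻¹)
    (hxb1 : xb1 = (V1 / γ1) * xb2) :
    {p : ℝ × ℝ | -γ1 * p.1 + V1 * p.2 = 0 ∧ -γ2 * p.2 + V2 * g p.1 = 0} =
      {((0:ℝ), (0:ℝ)), (V1 * V2 / (γ1 * γ2), V2 / γ2), (xb1, xb2)} ∧
    θ < xb1 ∧ xb1 < θ + δ ∧ θ + δ < V1 * V2 / (γ1 * γ2) := by
  have hδ' := hδ.ne'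
  have hγ1' := hγ1.ne'
  have hγ2' := hγ2.ne'
  have hV1' := hV1.ne'
  have hV2' := hV2.ne'
  have hθδ : 0 < θ / δ := div_pos hθ hδ
  have hd : θ / δ < V1 * V2 / (δ * γ1 * γ2) - 1 := by linarith
  have hd0 : 0 < V1 * V2 / (δ * γ1 * γ2) - 1 := by linarith
  have hδθ : δ * (θ / δ) = θ := by field_simp
  have hVγ : δ * γ1 * γ2 < V1 * V2 := by
    have h1 : 1 < V1 * V2 / (δ * γ1 * γ2) := by linarith
    exact (one_lt_div (by positivity)).mp h1
  have h0 : xb2 * (V1 * V2 / (δ * γ1 * γ2) - 1) = V2 * θ / (δ * γ2) := by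
    rw [hxb2, mul_assoc, inv_mul_cancel₀ hd0.ne', mul_one]
  have hkey : xb1 * (V1 * V2 / (δ * γ1 * γ2) - 1) = (V1 * V2 / (δ * γ1 * γ2)) * θ := by
    rw [hxb1, mul_assoc, h0]
    field_simp
  have hkeyp : xb1 * (V1 * V2) - xb1 * (δ * γ1 * γ2) = V1 * V2 * θ := by
    have h := hkey
    field_simp at h
    linear_combination h
  have h1 : θ < xb1 := by nlinarith [hkey]
  have h2 : xb1 < θ + δ := by nlinarith [hkey, mul_lt_mul_of_pos_left hd hδ]
  have hKeq : V1 * V2 / (γ1 * γ2) = δ * (V1 * V2 / (δ * γ1 * γ2)) := by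
    field_simp
  have h3 : θ + δ < V1 * V2 / (γ1 * γ2) := by
    rw [hKeq]
    nlinarith [mul_lt_mul_of_pos_left hbist hδ]
  have hxb2' : γ1 * xb1 = V1 * xb2 := by
    rw [hxb1]; field_simp
  refine ⟨?_, h1, h2, h3⟩
  ext ⟨x1, x2⟩
  simp only [Set.mem_setOf_eq, Set.mem_insert_iff, Set.mem_singleton_iff, Prod.mk.injEq]
  constructor
  · rintro ⟨e1, e2⟩
    rw [hg] at e2
    split_ifs at e2 with hc1 hc2
    · left
      have hx2 : x2 = 0 := by
        have h : γ2 * x2 = 0 := by linarith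
        exact (mul_eq_zero.mp h).resolve_left hγ2'
      have hx1 : x1 = 0 := by
        have h : γ1 * x1 = 0 := by rw [hx2] at e1; linarith
        exact (mul_eq_zero.mp h).resolve_left hγ1'
      exact ⟨hx1, hx2⟩
    · right; right
      have e2' : V2 * (x1 - θ) = γ2 * x2 * δ := by
        field_simp at e2
        linear_combination e2
      have e3p : x1 * (V1 * V2) - x1 * (δ * γ1 * γ2) = V1 * V2 * θ := by
        linear_combination V1 * e2' + δ * γ2 * e1
      have hx1 : x1 = xb1 := by
        have hz : (x1 - xb1) * (V1 * V2 - δ * γ1 * γ2) = 0 := by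
          linear_combination e3p - hkeyp
        rcases mul_eq_zero.mp hz with h | h
        · linarith [sub_eq_zero.mp h]
        · exfalso; have := sub_eq_zero.mp h; linarith
      have hx2 : x2 = xb2 := by
        apply mul_left_cancel₀ hV1'
        rw [← hxb2', ← hx1]
        linarith
      exact ⟨hx1, hx2⟩
    · right; left
      have hx2 : x2 = V2 / γ2 := by
        rw [eq_div_iff hγ2']
        linarith
      rw [hx2] at e1
      have hx1 : x1 = V1 * V2 / (γ1 * γ2) := by
        rw [eq_div_iff (by positivity)]
        field_simp at e1
        linear_combination -e1
      exact ⟨hx1, hx2⟩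
  · rintro (⟨h1', h2'⟩ | ⟨h1', h2'⟩ | ⟨h1', h2'⟩) <;> subst h1' <;> subst h2'
    · refine ⟨by ring, ?_⟩
      rw [hg, if_pos hθ]; ring
    · refine ⟨by field_simp; ring, ?_⟩
      rw [hg, if_neg (by push_neg; linarith), if_neg (by push_neg; linarith)]
      field_simp
      ring
    · refine ⟨by linarith [hxb2'], ?_⟩
      rw [hg, if_neg (by push_neg; linarith), if_pos (by linarith)]
      have hsad : γ2 * x2 * δ = V2 * (x1 - θ) := by
        apply mul_left_cancel₀ hV1'
        linear_combination -hkeyp - γ2 * δ * hxb2'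
      field_simp
      linear_combination -hsad
end

section
/- Let γ1, γ2, V1, V2, δ > 0 with V1·V2/(γ1·γ2·δ) > N, let L be a symmetric N×N Laplacian (PSD, L𝟙 = 0), and let M = [[-(γ1 I + L), V1 I], [(V2/δ)·D, -γ2 I]] with D = diag(w1,...,wN), wi ∈ {0,1}, not all wi zero. Then there exist arbitrarily small ε > 0 such that the Schur complement S_ε = -(γ1+ε)I - L + (V1V2/(δ(γ2+ε)))·D satisfies 𝟙ᵀ S_ε 𝟙 > 0; in particular S_ε, being symmetric, has a positive eigenvalue and hence is not Hurwitz. -/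
open Matrix

lemma pos_eig_of_pos_form {n : ℕ} (A : Matrix (Fin n) (Fin n) ℝ) (hA : A.IsHermitian)
    (x : Fin n → ℝ) (hx : 0 < x ⬝ᵥ (A *ᵥ x)) :
    ∃ μ : ℝ, 0 < μ ∧ ∃ v : Fin n → ℝ, v ≠ 0 ∧ A *ᵥ v = μ • v := by
  by_contra h
  push_neg at h
  have hall : ∀ i, hA.eigenvalues i ≤ 0 := by
    intro i
    by_contra hi
    push_neg at hi
    refine h _ hi ⇑(hA.eigenvectorBasis i) ?_ (hA.mulVec_eigenvectorBasis i)
    have hne := hA.eigenvectorBasis.orthonormal.ne_zero i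
    intro hc
    apply hne
    ext j
    exact congrFun hc j
  have hpsdneg : (-A).PosSemidef := by
    have hdecomp : -A = (hA.eigenvectorUnitary : Matrix (Fin n) (Fin n) ℝ) *
        diagonal (fun i => -hA.eigenvalues i) *
        star (hA.eigenvectorUnitary : Matrix (Fin n) (Fin n) ℝ) := by
      conv_lhs => rw [hA.spectral_theorem, Unitary.conjStarAlgAut_apply]
      have : diagonal (fun i => -hA.eigenvalues i) =
          -diagonal (RCLike.ofReal ∘ hA.eigenvalues) := by
        simp [diagonal_neg]
      rw [this]
      noncomm_ring
    rw [hdecomp]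
    exact (posSemidef_diagonal_iff.mpr
      (fun i => neg_nonneg.mpr (hall i))).mul_mul_conjTranspose_same _
  have h2 := hpsdneg.dotProduct_mulVec_nonneg x
  simp only [star_trivial, neg_mulVec, dotProduct_neg] at h2
  linarith

/-- In a mixed or linear domain, if `V1 V2/(γ1 γ2 δ) > N`, then for
arbitrarily small `ε > 0` the Schur complement
`S_ε = -(γ1+ε) I - L + (V1V2/(δ(γ2+ε))) D` satisfies `𝟙ᵀ S_ε 𝟙 > 0`, and in
particular has a positive eigenvalue (so it is not Hurwitz). -/
theorem stmt_13 (N : ℕ) (hN : 1 ≤ N) (γ1 γ2 V1 V2 δ : ℝ)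
    (hγ1 : 0 < γ1) (hγ2 : 0 < γ2) (hV1 : 0 < V1) (hV2 : 0 < V2) (hδ : 0 < δ)
    (hcrit : V1 * V2 / (γ1 * γ2 * δ) > N)
    (L : Matrix (Fin N) (Fin N) ℝ)
    (hsymm : L.IsSymm)
    (hpsd : ∀ v : Fin N → ℝ, 0 ≤ v ⬝ᵥ (L *ᵥ v))
    (hones : L *ᵥ (fun _ => (1:ℝ)) = 0)
    (w : Fin N → ℝ) (hw : ∀ i, w i = 0 ∨ w i = 1)
    (hw1 : ∃ i, w i = 1)
    (S : ℝ → Matrix (Fin N) (Fin N) ℝ)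
    (hS : ∀ ε, S ε = -((γ1 + ε) • (1 : Matrix (Fin N) (Fin N) ℝ)) - L +
      (V1 * V2 / (δ * (γ2 + ε))) • Matrix.diagonal w) :
    ∀ ε0 > (0:ℝ), ∃ ε : ℝ, 0 < ε ∧ ε < ε0 ∧
      0 < (fun _ => (1:ℝ)) ⬝ᵥ ((S ε) *ᵥ (fun _ => (1:ℝ))) ∧
      ∃ μ : ℝ, 0 < μ ∧ ∃ v : Fin N → ℝ, v ≠ 0 ∧ (S ε) *ᵥ v = μ • v := by
  intro ε0 hε0
  have hNpos : (0:ℝ) < N := by exact_mod_cast Nat.lt_of_lt_of_le Nat.zero_lt_one hN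
  have hN1 : (1:ℝ) ≤ N := by exact_mod_cast hN
  -- the margin
  have hA : 0 < V1 * V2 - N * (γ1 * γ2 * δ) := by
    have := (lt_div_iff₀ (by positivity : (0:ℝ) < γ1 * γ2 * δ)).mp hcrit
    linarith
  set A : ℝ := V1 * V2 - N * (γ1 * γ2 * δ) with hAdef
  set ε : ℝ := min (ε0/2) (min 1 (A / (2 * N * δ * (γ1 + γ2 + 1)))) with hεdef
  have hden : (0:ℝ) < 2 * N * δ * (γ1 + γ2 + 1) := by positivity
  have hεpos : 0 < ε := by
    apply lt_min (by linarith)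
    exact lt_min one_pos (by positivity)
  have hεsmall : ε < ε0 := lt_of_le_of_lt (min_le_left _ _) (by linarith)
  have hε1 : ε ≤ 1 := le_trans (min_le_right _ _) (min_le_left _ _)
  have hε2 : ε * (2 * N * δ * (γ1 + γ2 + 1)) ≤ A := by
    have this : ε ≤ A / (2 * N * δ * (γ1 + γ2 + 1)) :=
      le_trans (min_le_right (ε0/2) _) (min_le_right 1 _)
    calc ε * (2 * N * δ * (γ1 + γ2 + 1))
        ≤ (A / (2 * N * δ * (γ1 + γ2 + 1))) * (2 * N * δ * (γ1 + γ2 + 1)) := by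
          exact mul_le_mul_of_nonneg_right this hden.le
      _ = A := by field_simp
  have hγ2ε : (0:ℝ) < γ2 + ε := by linarith
  set c : ℝ := V1 * V2 / (δ * (γ2 + ε)) with hcdef
  have hcpos : 0 < c := by positivity
  -- sum of w
  have hwn : (1:ℝ) ≤ ∑ i, w i := by
    obtain ⟨i0, hi0⟩ := hw1
    calc (1:ℝ) = w i0 := hi0.symm
      _ ≤ ∑ i, w i := Finset.single_le_sum
          (fun i _ => (hw i).elim (fun h => h.ge) (fun h => by rw [h]; exact zero_le_one))
          (Finset.mem_univ i0)
  -- the quadratic form at 𝟙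
  have hform : (fun _ => (1:ℝ)) ⬝ᵥ ((S ε) *ᵥ (fun _ => (1:ℝ))) =
      -((γ1 + ε) * N) + c * ∑ i, w i := by
    rw [hS]
    have e1 : (-((γ1 + ε) • (1 : Matrix (Fin N) (Fin N) ℝ)) - L +
        c • Matrix.diagonal w) *ᵥ (fun _ => (1:ℝ)) = (fun i => -(γ1+ε) + c * w i) := by
      ext i
      simp [add_mulVec, sub_mulVec, neg_mulVec, smul_mulVec, one_mulVec, hones,
        mulVec_diagonal]
    rw [e1]
    simp [dotProduct, Finset.sum_add_distrib, Finset.mul_sum, Finset.sum_const,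
      Finset.card_univ]
    ring
  have hkey : (γ1 + ε) * N < c := by
    rw [hcdef, lt_div_iff₀ (by positivity)]
    nlinarith [hε2, hε1, hεpos, hNpos, hδ, hγ1, hγ2, mul_pos hNpos hδ]
  have hpos : 0 < -((γ1 + ε) * N) + c * ∑ i, w i := by
    have h1 : c ≤ c * ∑ i, w i := le_mul_of_one_le_right hcpos.le hwn
    linarith
  have hherm : (S ε).IsHermitian := by
    rw [hS]
    unfold Matrix.IsHermitian
    rw [conjTranspose_eq_transpose_of_trivial]
    simp [Matrix.transpose_add, Matrix.transpose_sub, Matrix.transpose_smul,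
      Matrix.transpose_one, Matrix.diagonal_transpose, hsymm.eq]
  refine ⟨ε, hεpos, hεsmall, ?_, ?_⟩
  · rw [hform]; exact hpos
  · exact pos_eig_of_pos_form _ hherm _ (by rw [hform]; exact hpos)
end

section
/- Assume V1, V2, γ1, γ2, θ, δ, k > 0, N ≥ 2, and set V = V1V2/(γ1γ2). Let X̄1 ∈ ℝᴺ be an equilibrium vector satisfying, for an all-to-all coupled network, x̄_{1,i} = γ1·V/(Nk+γ1) + V·Nk·q̄/(Nk+γ1) for i in a set of cardinality m and x̄_{1,i} = V·Nk·q̄/(Nk+γ1) for the remaining N−m indices, with q̄ = m/N, 1 ≤ m ≤ N−1 and θ < V·q̄ < θ+δ. If k ≥ min{γ1(θ+δ−V)/(N(Vq̄−(θ+δ))), θγ1/(N(Vq̄−θ))} (interpreting the first bound as unsatisfiable when θ+δ < V), then it is impossible that simultaneously γ1·V/(Nk+γ1) + V·Nk·q̄/(Nk+γ1) > θ+δ and V·Nk·q̄/(Nk+γ1) < θ. That is, the saturated-domain membership conditions fail. -/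
/-- If `k` exceeds the minimum of the two thresholds `k₁^q̄, k₂^q̄`, then the
saturated-domain membership conditions for an equilibrium with average
activation `q̄ = m/N`, `θ < V q̄ < θ + δ`, cannot both hold. -/
theorem stmt_15 (V1 V2 γ1 γ2 θ δ k : ℝ) (N m : ℕ)
    (hV1 : 0 < V1) (hV2 : 0 < V2) (hγ1 : 0 < γ1) (hγ2 : 0 < γ2)
    (hθ : 0 < θ) (hδ : 0 < δ) (hk : 0 < k)
    (hN : 2 ≤ N) (hm1 : 1 ≤ m) (hm2 : m ≤ N - 1)
    (V q : ℝ) (hV : V = V1 * V2 / (γ1 * γ2)) (hq : q = (m : ℝ) / N)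
    (hq1 : θ < V * q) (hq2 : V * q < θ + δ)
    (hkbig : min (γ1 * ((θ + δ) - V) / ((N : ℝ) * (V * q - (θ + δ))))
                 (θ * γ1 / ((N : ℝ) * (V * q - θ))) ≤ k) :
    ¬ (θ + δ < γ1 * V / ((N : ℝ) * k + γ1) +
          V * ((N : ℝ) * k) * q / ((N : ℝ) * k + γ1) ∧
       V * ((N : ℝ) * k) * q / ((N : ℝ) * k + γ1) < θ) := by
  rintro ⟨h1, h2⟩
  have hNpos : (0 : ℝ) < (N : ℝ) := by positivity
  have hD : (0 : ℝ) < (N : ℝ) * k + γ1 := by positivity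
  rw [← add_div, lt_div_iff₀ hD] at h1
  rw [div_lt_iff₀ hD] at h2
  rcases min_le_iff.mp hkbig with h | h
  · have hneg : (N : ℝ) * (V * q - (θ + δ)) < 0 :=
      mul_neg_of_pos_of_neg hNpos (by linarith)
    rw [div_le_iff_of_neg hneg] at h
    nlinarith
  · have hpos : (0 : ℝ) < (N : ℝ) * (V * q - θ) :=
      mul_pos hNpos (by linarith)
    rw [div_le_iff₀ hpos] at h
    nlinarith
end
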